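/- Let a₁, a₂ be coprime integers with a₁t₁ + a₂t₂ = 1, and let A ∈ M_{p+q}(ℤ) be written in block form A = [[X, Y], [Z, W]] with X ∈ M_p(ℤ), W ∈ M_q(ℤ). Then A − a₁·[[0, t₁Y],[t₁Z, I]]² − a₂·[[0, t₂Y],[t₂Z, I]]² is block diagonal, i.e., has zero off-diagonal blocks. -/

import Mathlib

set_option maxHeartbeats 1000000 in
theorem stmt7 (p q : ℕ) (a₁ a₂ t₁ t₂ : ℤ) (h : a₁ * t₁ + a₂ * t₂ = 1)
    (X : Matrix (Fin p) (Fin p) ℤ) (Y : Matrix (Fin p) (Fin q) ℤ)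
    (Z : Matrix (Fin q) (Fin p) ℤ) (W : Matrix (Fin q) (Fin q) ℤ) :
    (Matrix.fromBlocks X Y Z W
        - a₁ • (Matrix.fromBlocks 0 (t₁ • Y) (t₁ • Z) 1) ^ 2
        - a₂ • (Matrix.fromBlocks 0 (t₂ • Y) (t₂ • Z) 1) ^ 2).toBlocks₁₂ = 0 ∧
    (Matrix.fromBlocks X Y Z W
        - a₁ • (Matrix.fromBlocks 0 (t₁ • Y) (t₁ • Z) 1) ^ 2
        - a₂ • (Matrix.fromBlocks 0 (t₂ • Y) (t₂ • Z) 1) ^ 2).toBlocks₂₁ = 0 := by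
  simp only [sq, Matrix.fromBlocks_multiply, Matrix.fromBlocks_smul]
  constructor <;>
  · ext i j
    simp [Matrix.toBlocks₁₂, Matrix.toBlocks₂₁, Matrix.sub_apply]
    first
    | linear_combination (-(Y i j)) * h
    | linear_combination (-(Z i j)) * h
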